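/- In a MAMDP (M, P_A), a Q-function and policy π satisfying the virtual policy value objective — Q(s,a) = R(s,a) + γ E_{s'~P(s,a)} E_{a'~π(s')}[Q(s',a')] together with π(s) = argmax_a Q(s,a) — exist if and only if Q = Q*_M and π is an optimal policy of the underlying MDP M. That is, sampling the bootstrap action virtually from π (rather than from the modified action distribution) yields policies that ignore the action modification. -/

import Mathlib

open scoped BigOperators

def IsDist {X : Type*} [Fintype X] (d : X → ℝ) : Prop :=
  (∀ x, 0 ≤ d x) ∧ ∑ x, d x = 1

def IsKernel {S A : Type*} [Fintype S] (P : S → A → S → ℝ) : Prop :=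
  ∀ s a, IsDist (P s a)

def IsStochPolicy {S A : Type*} [Fintype A] (π : S → A → ℝ) : Prop :=
  ∀ s, IsDist (π s)

/-- Distribution over states after `t` steps, starting from `init`, when the
executed-action distribution in state `s` is `sel s`. -/
noncomputable def stateDist {S A : Type*} [Fintype S] [Fintype A]
    (P : S → A → S → ℝ) (sel : S → A → ℝ) (init : S → ℝ) : ℕ → S → ℝ
  | 0 => init
  | t + 1 => fun s' => ∑ s, ∑ a, stateDist P sel init t s * sel s a * P s a s'

/-- Expected discounted return `E[∑ γ^t R(S_t, A_t)]` where `A_t ~ sel S_t`. -/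
noncomputable def expReturn {S A : Type*} [Fintype S] [Fintype A]
    (P : S → A → S → ℝ) (R : S → A → ℝ) (γ : ℝ) (sel : S → A → ℝ) (init : S → ℝ) : ℝ :=
  ∑' t : ℕ, γ ^ t * ∑ s, ∑ a, stateDist P sel init t s * sel s a * R s a

section Aux
variable {S A : Type*} [Fintype S] [Fintype A]

lemma dist_le_one {X : Type*} [Fintype X] {d : X → ℝ} (hd : IsDist d) (x : X) : d x ≤ 1 := by
  have := Finset.single_le_sum (fun i _ => hd.1 i) (Finset.mem_univ x)
  rw [hd.2] at this; exact this

lemma stateDist_isDist {P : S → A → S → ℝ} {sel : S → A → ℝ} {init : S → ℝ}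
    (hP : IsKernel P) (hsel : IsStochPolicy sel) (hinit : IsDist init) :
    ∀ t, IsDist (stateDist P sel init t) := by
  intro t
  induction t with
  | zero => exact hinit
  | succ t ih =>
    constructor
    · intro s'
      apply Finset.sum_nonneg; intro s _
      apply Finset.sum_nonneg; intro a _
      have h1 := ih.1 s
      have h2 := (hsel s).1 a
      have h3 := (hP s a).1 s'
      positivity
    · show ∑ s', ∑ s, ∑ a,
        stateDist P sel init t s * sel s a * P s a s' = 1
      rw [Finset.sum_comm]
      have key : ∀ s, ∑ s', ∑ a,
          stateDist P sel init t s * sel s a * P s a s' = stateDist P sel init t s := by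
        intro s
        rw [Finset.sum_comm]
        calc ∑ a, ∑ s', stateDist P sel init t s * sel s a * P s a s'
            = ∑ a, stateDist P sel init t s * sel s a * ∑ s', P s a s' := by
              simp [Finset.mul_sum]
          _ = ∑ a, stateDist P sel init t s * sel s a := by
              refine Finset.sum_congr rfl fun a _ => ?_
              rw [(hP s a).2, mul_one]
          _ = stateDist P sel init t s * ∑ a, sel s a := by rw [Finset.mul_sum]
          _ = stateDist P sel init t s := by rw [(hsel s).2, mul_one]
      rw [Finset.sum_congr rfl fun s _ => key s, ih.2]

lemma abs_instant_le {sel : S → A → ℝ} (R : S → A → ℝ) {ρ : S → ℝ}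
    (hsel : IsStochPolicy sel) (hρ : IsDist ρ) :
    |∑ s, ∑ a, ρ s * sel s a * R s a| ≤ ∑ s, ∑ a, |R s a| := by
  calc |∑ s, ∑ a, ρ s * sel s a * R s a|
      ≤ ∑ s, |∑ a, ρ s * sel s a * R s a| := Finset.abs_sum_le_sum_abs _ _
    _ ≤ ∑ s, ∑ a, |ρ s * sel s a * R s a| :=
        Finset.sum_le_sum fun s _ => Finset.abs_sum_le_sum_abs _ _
    _ ≤ ∑ s, ∑ a, |R s a| := by
        refine Finset.sum_le_sum fun s _ => Finset.sum_le_sum fun a _ => ?_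
        rw [abs_mul, abs_mul]
        have h1 : |ρ s| ≤ 1 := by
          rw [abs_of_nonneg (hρ.1 s)]; exact dist_le_one hρ s
        have h2 : |sel s a| ≤ 1 := by
          rw [abs_of_nonneg ((hsel s).1 a)]; exact dist_le_one (hsel s) a
        calc |ρ s| * |sel s a| * |R s a| ≤ 1 * 1 * |R s a| := by
              apply mul_le_mul_of_nonneg_right _ (abs_nonneg _)
              exact mul_le_mul h1 h2 (abs_nonneg _) zero_le_one
          _ = |R s a| := by ring

lemma summable_ret {P : S → A → S → ℝ} {sel : S → A → ℝ} (R : S → A → ℝ) {init : S → ℝ}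
    {γ : ℝ} (hγ0 : 0 ≤ γ) (hγ1 : γ < 1)
    (hP : IsKernel P) (hsel : IsStochPolicy sel) (hinit : IsDist init) :
    Summable (fun t => γ ^ t * ∑ s, ∑ a, stateDist P sel init t s * sel s a * R s a) := by
  apply Summable.of_norm_bounded (((summable_geometric_of_lt_one hγ0 hγ1).mul_left
    (∑ s, ∑ a, |R s a|)))
  intro t
  rw [Real.norm_eq_abs, abs_mul, abs_of_nonneg (pow_nonneg hγ0 t), mul_comm]
  apply mul_le_mul_of_nonneg_right _ (pow_nonneg hγ0 t)
  exact abs_instant_le R hsel (ρ := stateDist P sel init t) (stateDist_isDist hP hsel hinit t)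

lemma sum_step_eq {P : S → A → S → ℝ} {sel : S → A → ℝ} {ρ : S → ℝ} {γ : ℝ}
    (R : S → A → ℝ) (W : S → ℝ) (n : ℕ) :
    (∑ s, ∑ a, stateDist P sel ρ n s * sel s a * R s a)
      + γ * ∑ s', stateDist P sel ρ (n+1) s' * W s'
    = ∑ s, stateDist P sel ρ n s *
        ∑ a, sel s a * (R s a + γ * ∑ s', P s a s' * W s') := by
  have hswap : ∑ s', stateDist P sel ρ (n+1) s' * W s'
      = ∑ s, ∑ a, stateDist P sel ρ n s * sel s a * ∑ s', P s a s' * W s' := by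
    show ∑ s', (∑ s, ∑ a, stateDist P sel ρ n s * sel s a * P s a s') * W s' = _
    simp only [Finset.sum_mul]
    rw [Finset.sum_comm]
    refine Finset.sum_congr rfl fun s _ => ?_
    rw [Finset.sum_comm]
    refine Finset.sum_congr rfl fun a _ => ?_
    rw [Finset.mul_sum]
    exact Finset.sum_congr rfl fun s' _ => by ring
  have hterm : ∀ s, stateDist P sel ρ n s *
        ∑ a, sel s a * (R s a + γ * ∑ s', P s a s' * W s')
      = (∑ a, stateDist P sel ρ n s * sel s a * R s a)
        + ∑ a, γ * (stateDist P sel ρ n s * sel s a * ∑ s', P s a s' * W s') := by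
    intro s
    rw [Finset.mul_sum, ← Finset.sum_add_distrib]
    exact Finset.sum_congr rfl fun a _ => by ring
  calc (∑ s, ∑ a, stateDist P sel ρ n s * sel s a * R s a)
        + γ * ∑ s', stateDist P sel ρ (n+1) s' * W s'
      = (∑ s, ∑ a, stateDist P sel ρ n s * sel s a * R s a)
        + ∑ s, ∑ a, γ * (stateDist P sel ρ n s * sel s a * ∑ s', P s a s' * W s') := by
        rw [hswap]; simp only [Finset.mul_sum]
    _ = ∑ s, ((∑ a, stateDist P sel ρ n s * sel s a * R s a)
        + ∑ a, γ * (stateDist P sel ρ n s * sel s a * ∑ s', P s a s' * W s')) := by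
        rw [Finset.sum_add_distrib]
    _ = _ := Finset.sum_congr rfl fun s _ => (hterm s).symm

lemma tendsto_F {P : S → A → S → ℝ} {R : S → A → ℝ} {γ : ℝ}
    {sel : S → A → ℝ} {ρ : S → ℝ} (W : S → ℝ)
    (hP : IsKernel P) (hγ0 : 0 ≤ γ) (hγ1 : γ < 1)
    (hsel : IsStochPolicy sel) (hρ : IsDist ρ) :
    Filter.Tendsto (fun n =>
        (∑ t ∈ Finset.range n, γ ^ t * ∑ s, ∑ a, stateDist P sel ρ t s * sel s a * R s a)
        + γ ^ n * ∑ s, stateDist P sel ρ n s * W s)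
      Filter.atTop (nhds (expReturn P R γ sel ρ)) := by
  have h1 := (summable_ret R hγ0 hγ1 hP hsel hρ).hasSum.tendsto_sum_nat
  have h2 : Filter.Tendsto (fun n => γ ^ n * ∑ s, stateDist P sel ρ n s * W s)
      Filter.atTop (nhds 0) := by
    apply squeeze_zero_norm (a := fun n => (∑ s, |W s|) * γ ^ n)
    · intro n
      rw [Real.norm_eq_abs, abs_mul, abs_of_nonneg (pow_nonneg hγ0 n), mul_comm]
      apply mul_le_mul_of_nonneg_right _ (pow_nonneg hγ0 n)
      have hd := stateDist_isDist hP hsel hρ n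
      calc |∑ s, stateDist P sel ρ n s * W s|
          ≤ ∑ s, |stateDist P sel ρ n s * W s| := Finset.abs_sum_le_sum_abs _ _
        _ ≤ ∑ s, |W s| := by
            refine Finset.sum_le_sum fun s _ => ?_
            rw [abs_mul, abs_of_nonneg (hd.1 s)]
            calc stateDist P sel ρ n s * |W s| ≤ 1 * |W s| :=
                  mul_le_mul_of_nonneg_right (dist_le_one hd s) (abs_nonneg _)
              _ = |W s| := one_mul _
    · simpa using (tendsto_pow_atTop_nhds_zero_of_lt_one hγ0 hγ1).const_mul (∑ s, |W s|)
  have h3 := h1.add h2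
  rw [add_zero] at h3
  exact h3

lemma expReturn_le_of_le {P : S → A → S → ℝ} {R : S → A → ℝ} {γ : ℝ}
    {sel : S → A → ℝ} {ρ : S → ℝ} {W : S → ℝ}
    (hP : IsKernel P) (hγ0 : 0 ≤ γ) (hγ1 : γ < 1)
    (hsel : IsStochPolicy sel) (hρ : IsDist ρ)
    (hW : ∀ s, ∑ a, sel s a * (R s a + γ * ∑ s', P s a s' * W s') ≤ W s) :
    expReturn P R γ sel ρ ≤ ∑ s, ρ s * W s := by
  set F : ℕ → ℝ := fun n =>
      (∑ t ∈ Finset.range n, γ ^ t * ∑ s, ∑ a, stateDist P sel ρ t s * sel s a * R s a)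
      + γ ^ n * ∑ s, stateDist P sel ρ n s * W s with hF
  have hmono : ∀ n, F (n+1) ≤ F n := by
    intro n
    have key := sum_step_eq (P := P) (sel := sel) (ρ := ρ) (γ := γ) R W n
    have hle : ∑ s, stateDist P sel ρ n s *
        ∑ a, sel s a * (R s a + γ * ∑ s', P s a s' * W s')
        ≤ ∑ s, stateDist P sel ρ n s * W s := by
      refine Finset.sum_le_sum fun s _ => ?_
      exact mul_le_mul_of_nonneg_left (hW s) ((stateDist_isDist hP hsel hρ n).1 s)
    have h4 : (∑ s, ∑ a, stateDist P sel ρ n s * sel s a * R s a)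
        + γ * ∑ s', stateDist P sel ρ (n+1) s' * W s'
        ≤ ∑ s, stateDist P sel ρ n s * W s := key ▸ hle
    have h5 := mul_le_mul_of_nonneg_left h4 (pow_nonneg hγ0 n)
    simp only [hF]
    rw [Finset.sum_range_succ]
    rw [mul_add, ← mul_assoc, ← pow_succ] at h5
    linarith
  have hF0 : ∀ n, F n ≤ F 0 := fun n => (antitone_nat_of_succ_le hmono) (Nat.zero_le n)
  have htend := tendsto_F (P := P) (R := R) (γ := γ) (sel := sel) (ρ := ρ) W hP hγ0 hγ1 hsel hρ
  calc expReturn P R γ sel ρ ≤ F 0 := le_of_tendsto' htend hF0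
    _ = ∑ s, ρ s * W s := by simp [hF, stateDist]

lemma le_expReturn_of_le {P : S → A → S → ℝ} {R : S → A → ℝ} {γ : ℝ}
    {sel : S → A → ℝ} {ρ : S → ℝ} {W : S → ℝ}
    (hP : IsKernel P) (hγ0 : 0 ≤ γ) (hγ1 : γ < 1)
    (hsel : IsStochPolicy sel) (hρ : IsDist ρ)
    (hW : ∀ s, W s ≤ ∑ a, sel s a * (R s a + γ * ∑ s', P s a s' * W s')) :
    ∑ s, ρ s * W s ≤ expReturn P R γ sel ρ := by
  set F : ℕ → ℝ := fun n =>
      (∑ t ∈ Finset.range n, γ ^ t * ∑ s, ∑ a, stateDist P sel ρ t s * sel s a * R s a)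
      + γ ^ n * ∑ s, stateDist P sel ρ n s * W s with hF
  have hmono : ∀ n, F n ≤ F (n+1) := by
    intro n
    have key := sum_step_eq (P := P) (sel := sel) (ρ := ρ) (γ := γ) R W n
    have hle : ∑ s, stateDist P sel ρ n s * W s
        ≤ ∑ s, stateDist P sel ρ n s *
            ∑ a, sel s a * (R s a + γ * ∑ s', P s a s' * W s') := by
      refine Finset.sum_le_sum fun s _ => ?_
      exact mul_le_mul_of_nonneg_left (hW s) ((stateDist_isDist hP hsel hρ n).1 s)
    have h4 : ∑ s, stateDist P sel ρ n s * W s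
        ≤ (∑ s, ∑ a, stateDist P sel ρ n s * sel s a * R s a)
          + γ * ∑ s', stateDist P sel ρ (n+1) s' * W s' := key ▸ hle
    have h5 := mul_le_mul_of_nonneg_left h4 (pow_nonneg hγ0 n)
    simp only [hF]
    rw [Finset.sum_range_succ]
    rw [mul_add, ← mul_assoc, ← pow_succ] at h5
    linarith
  have hF0 : ∀ n, F 0 ≤ F n := fun n => (monotone_nat_of_le_succ hmono) (Nat.zero_le n)
  have htend := tendsto_F (P := P) (R := R) (γ := γ) (sel := sel) (ρ := ρ) W hP hγ0 hγ1 hsel hρ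
  have : F 0 ≤ expReturn P R γ sel ρ := ge_of_tendsto' htend hF0
  calc ∑ s, ρ s * W s = F 0 := by simp [hF, stateDist]
    _ ≤ expReturn P R γ sel ρ := this

lemma ciSup_eq_max [Nonempty A] {f : A → ℝ} {a0 : A} (h : ∀ a, f a ≤ f a0) :
    (⨆ a, f a) = f a0 :=
  le_antisymm (ciSup_le h) (le_ciSup (Finite.bddAbove_range f) a0)

lemma le_ciSup_fin [Nonempty A] (f : A → ℝ) (a : A) : f a ≤ ⨆ a', f a' :=
  le_ciSup (Finite.bddAbove_range f) a

lemma exists_ciSup_eq [Nonempty A] (f : A → ℝ) :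
    ∃ a0, (⨆ a, f a) = f a0 ∧ ∀ a, f a ≤ f a0 := by
  obtain ⟨a0, -, h⟩ := Finset.exists_max_image Finset.univ f Finset.univ_nonempty
  exact ⟨a0, ciSup_eq_max (fun a => h a (Finset.mem_univ a)),
    fun a => h a (Finset.mem_univ a)⟩

lemma bellman_opt_unique [Nonempty A] {P : S → A → S → ℝ} {R : S → A → ℝ} {γ : ℝ}
    (hP : IsKernel P) (hγ0 : 0 ≤ γ) (hγ1 : γ < 1)
    {Q1 Q2 : S → A → ℝ}
    (h1 : ∀ s a, Q1 s a = R s a + γ * ∑ s', P s a s' * ⨆ a', Q1 s' a')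
    (h2 : ∀ s a, Q2 s a = R s a + γ * ∑ s', P s a s' * ⨆ a', Q2 s' a') :
    Q1 = Q2 := by
  rcases isEmpty_or_nonempty S with hS | hS
  · funext s; exact (IsEmpty.false s).elim
  set M : ℝ := Finset.univ.sup' Finset.univ_nonempty
      (fun s => |(⨆ a, Q1 s a) - ⨆ a, Q2 s a|) with hM
  have hVM : ∀ s, |(⨆ a, Q1 s a) - ⨆ a, Q2 s a| ≤ M :=
    fun s => Finset.le_sup' (fun s => |(⨆ a, Q1 s a) - ⨆ a, Q2 s a|) (Finset.mem_univ s)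
  have hM0 : 0 ≤ M := le_trans (abs_nonneg _) (hVM (Classical.arbitrary S))
  have hQ : ∀ s a, |Q1 s a - Q2 s a| ≤ γ * M := by
    intro s a
    rw [h1 s a, h2 s a]
    have hsub : (∑ s', P s a s' * ⨆ a', Q1 s' a') - (∑ s', P s a s' * ⨆ a', Q2 s' a')
        = ∑ s', P s a s' * ((⨆ a', Q1 s' a') - ⨆ a', Q2 s' a') := by
      rw [← Finset.sum_sub_distrib]
      exact Finset.sum_congr rfl fun s' _ => (mul_sub _ _ _).symm
    have heq : R s a + γ * (∑ s', P s a s' * ⨆ a', Q1 s' a')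
        - (R s a + γ * ∑ s', P s a s' * ⨆ a', Q2 s' a')
        = γ * ∑ s', P s a s' * ((⨆ a', Q1 s' a') - ⨆ a', Q2 s' a') := by
      rw [← hsub]; ring
    rw [heq, abs_mul, abs_of_nonneg hγ0]
    apply mul_le_mul_of_nonneg_left _ hγ0
    calc |∑ s', P s a s' * ((⨆ a', Q1 s' a') - ⨆ a', Q2 s' a')|
        ≤ ∑ s', |P s a s' * ((⨆ a', Q1 s' a') - ⨆ a', Q2 s' a')| :=
          Finset.abs_sum_le_sum_abs _ _
      _ ≤ ∑ s', P s a s' * M := by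
          refine Finset.sum_le_sum fun s' _ => ?_
          rw [abs_mul, abs_of_nonneg ((hP s a).1 s')]
          exact mul_le_mul_of_nonneg_left (hVM s') ((hP s a).1 s')
      _ = M := by rw [← Finset.sum_mul, (hP s a).2, one_mul]
  have hV : ∀ s, |(⨆ a, Q1 s a) - ⨆ a, Q2 s a| ≤ γ * M := by
    intro s
    rw [abs_sub_le_iff]
    constructor
    · rw [sub_le_iff_le_add]
      apply ciSup_le
      intro a
      have hq := (abs_sub_le_iff.mp (hQ s a)).1
      have h2' := le_ciSup_fin (Q2 s) a
      linarith
    · rw [sub_le_iff_le_add]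
      apply ciSup_le
      intro a
      have hq := (abs_sub_le_iff.mp (hQ s a)).2
      have h1' := le_ciSup_fin (Q1 s) a
      linarith
  have hMle : M ≤ γ * M := Finset.sup'_le _ _ fun s _ => hV s
  have hMz : M ≤ 0 := by
    by_contra h
    push_neg at h
    have : γ * M < 1 * M := mul_lt_mul_of_pos_right hγ1 h
    linarith
  have hVeq : ∀ s, (⨆ a, Q1 s a) = ⨆ a, Q2 s a := by
    intro s
    have h := le_trans (hVM s) hMz
    have := abs_nonpos_iff.mp h
    linarith [sub_eq_zero.mp this]
  funext s a
  rw [h1 s a, h2 s a]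
  congr 1
  congr 1
  exact Finset.sum_congr rfl fun s' _ => by rw [hVeq s']

lemma detPolicy_isStoch [Nonempty A] [DecidableEq A] (π : S → A) :
    IsStochPolicy (fun s a => if a = π s then (1:ℝ) else 0) := by
  intro s
  constructor
  · intro a; dsimp only; split <;> norm_num
  · simp

lemma sum_detPolicy [Nonempty A] [DecidableEq A] (π : S → A) (s : S) (g : A → ℝ) :
    ∑ a, (if a = π s then (1:ℝ) else 0) * g a = g (π s) := by
  simp [ite_mul]

lemma expReturn_le_optval [Nonempty A] {P : S → A → S → ℝ} {R : S → A → ℝ} {γ : ℝ}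
    (hP : IsKernel P) (hγ0 : 0 ≤ γ) (hγ1 : γ < 1) {Qstar : S → A → ℝ}
    (hQstar : ∀ s a, Qstar s a = R s a + γ * ∑ s', P s a s' * ⨆ a', Qstar s' a')
    {sel : S → A → ℝ} (hsel : IsStochPolicy sel) {ρ : S → ℝ} (hρ : IsDist ρ) :
    expReturn P R γ sel ρ ≤ ∑ s, ρ s * ⨆ a, Qstar s a := by
  have hW : ∀ s, ∑ a, sel s a * (R s a + γ * ∑ s', P s a s' * ⨆ a', Qstar s' a')
      ≤ ⨆ a, Qstar s a := by
    intro s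
    calc ∑ a, sel s a * (R s a + γ * ∑ s', P s a s' * ⨆ a', Qstar s' a')
        = ∑ a, sel s a * Qstar s a :=
          Finset.sum_congr rfl fun a _ => by rw [← hQstar s a]
      _ ≤ ∑ a, sel s a * ⨆ a', Qstar s a' := Finset.sum_le_sum fun a _ =>
          mul_le_mul_of_nonneg_left (le_ciSup_fin _ a) ((hsel s).1 a)
      _ = ⨆ a', Qstar s a' := by rw [← Finset.sum_mul, (hsel s).2, one_mul]
  exact expReturn_le_of_le hP hγ0 hγ1 hsel hρ hW

lemma optval_le_expReturn_det [Nonempty A] [DecidableEq A]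
    {P : S → A → S → ℝ} {R : S → A → ℝ} {γ : ℝ}
    (hP : IsKernel P) (hγ0 : 0 ≤ γ) (hγ1 : γ < 1) {Qstar : S → A → ℝ}
    (hQstar : ∀ s a, Qstar s a = R s a + γ * ∑ s', P s a s' * ⨆ a', Qstar s' a')
    {π : S → A} (hπ : ∀ s, (⨆ a, Qstar s a) = Qstar s (π s))
    {ρ : S → ℝ} (hρ : IsDist ρ) :
    ∑ s, ρ s * ⨆ a, Qstar s a
      ≤ expReturn P R γ (fun s a => if a = π s then 1 else 0) ρ := by
  have hW : ∀ s, (⨆ a, Qstar s a) ≤ ∑ a, (if a = π s then (1:ℝ) else 0) *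
      (R s a + γ * ∑ s', P s a s' * ⨆ a', Qstar s' a') := by
    intro s
    rw [sum_detPolicy π s, ← hQstar s (π s)]
    exact (hπ s).le
  exact le_expReturn_of_le hP hγ0 hγ1 (detPolicy_isStoch π) hρ hW

end Aux

/-- on a MAMDP `(M, PA)`, a Q-function and deterministic policy π satisfy
the virtual policy value objective (bootstrap action sampled virtually from π)
iff `Q = Q*_M` and π is an optimal policy of the underlying MDP `M`;
the action modification `PA` is ignored. -/
theorem virtual_policy_value_iff_mdp_optimal
    {S A : Type*} [Fintype S] [Fintype A] [Nonempty A] [DecidableEq A]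
    (P : S → A → S → ℝ) (R : S → A → ℝ) (γ : ℝ)
    (hP : IsKernel P) (hγ0 : 0 ≤ γ) (hγ1 : γ < 1)
    (PA : (S → A → ℝ) → S → A → ℝ)
    (hPA : ∀ π, IsStochPolicy π → IsStochPolicy (PA π))
    -- `Qstar` is the (unique) optimal action-value function of the underlying MDP `M`
    (Qstar : S → A → ℝ)
    (hQstar : ∀ s a, Qstar s a = R s a + γ * ∑ s', P s a s' * ⨆ a', Qstar s' a')
    (Q : S → A → ℝ) (π : S → A) :
    ((∀ s a, Q s a = R s a + γ * ∑ s', P s a s' * Q s' (π s')) ∧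
      (∀ s a, Q s a ≤ Q s (π s)))
    ↔ (Q = Qstar ∧
        ∀ init : S → ℝ, IsDist init → ∀ π' : S → A → ℝ, IsStochPolicy π' →
          expReturn P R γ π' init ≤
            expReturn P R γ (fun s a => if a = π s then 1 else 0) init) := by
  classical
  constructor
  · rintro ⟨hbell, hgreedy⟩
    have hπmax : ∀ s, (⨆ a, Q s a) = Q s (π s) := fun s => ciSup_eq_max (hgreedy s)
    have hoptQ : ∀ s a, Q s a = R s a + γ * ∑ s', P s a s' * ⨆ a', Q s' a' := by
      intro s a
      rw [hbell s a]
      congr 1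
      congr 1
      exact Finset.sum_congr rfl fun s' _ => by rw [hπmax s']
    have hQeq : Q = Qstar := bellman_opt_unique hP hγ0 hγ1 hoptQ hQstar
    subst hQeq
    refine ⟨rfl, ?_⟩
    intro init hinit π' hπ'
    calc expReturn P R γ π' init ≤ ∑ s, init s * ⨆ a, Q s a :=
          expReturn_le_optval hP hγ0 hγ1 hQstar hπ' hinit
      _ ≤ expReturn P R γ (fun s a => if a = π s then 1 else 0) init :=
          optval_le_expReturn_det hP hγ0 hγ1 hQstar hπmax hinit
  · rintro ⟨rfl, hopt⟩
    -- now `Qstar` has been replaced by `Q`? (rfl : Q = Qstar)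
    have hg : ∀ s, ∃ a0, (⨆ a, Q s a) = Q s a0 ∧ ∀ a, Q s a ≤ Q s a0 :=
      fun s => exists_ciSup_eq (Q s)
    choose πg hπg1 hπg2 using hg
    have key : ∀ s, (⨆ a, Q s a) ≤ Q s (π s) := by
      intro s
      set δs : S → ℝ := fun s'' => if s'' = s then (1:ℝ) else 0 with hδs
      have hδ : IsDist δs := by
        constructor
        · intro x; simp only [hδs]; split <;> norm_num
        · simp [hδs]
      set W : S → ℝ := fun s'' => if s'' = s then Q s (π s) else ⨆ a, Q s'' a with hWdef
      have hWle : ∀ s', W s' ≤ ⨆ a, Q s' a := by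
        intro s'
        simp only [hWdef]
        split
        · next h => subst h; exact le_ciSup_fin (Q s') (π s')
        · exact le_rfl
      have h1 : ∑ s'', δs s'' * ⨆ a, Q s'' a
          ≤ expReturn P R γ (fun s' a => if a = πg s' then 1 else 0) δs :=
        optval_le_expReturn_det hP hγ0 hγ1 hQstar hπg1 hδ
      have h2 := hopt δs hδ (fun s' a => if a = πg s' then 1 else 0) (detPolicy_isStoch πg)
      have h3 : expReturn P R γ (fun s' a => if a = π s' then 1 else 0) δs
          ≤ ∑ s'', δs s'' * W s'' := by
        apply expReturn_le_of_le hP hγ0 hγ1 (detPolicy_isStoch π) hδ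
        intro s''
        rw [sum_detPolicy π s'']
        have hb : R s'' (π s'') + γ * ∑ s', P s'' (π s'') s' * W s'
            ≤ R s'' (π s'') + γ * ∑ s', P s'' (π s'') s' * ⨆ a, Q s' a := by
          have : ∑ s', P s'' (π s'') s' * W s'
              ≤ ∑ s', P s'' (π s'') s' * ⨆ a, Q s' a :=
            Finset.sum_le_sum fun s' _ =>
              mul_le_mul_of_nonneg_left (hWle s') ((hP s'' (π s'')).1 s')
          nlinarith [this, hγ0]
        refine le_trans hb ?_
        rw [← hQstar s'' (π s'')]
        simp only [hWdef]
        split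
        · next h => subst h; exact le_rfl
        · exact le_ciSup_fin (Q s'') (π s'')
      have e1 : ∑ s'', δs s'' * ⨆ a, Q s'' a = ⨆ a, Q s a := by
        simp [hδs, ite_mul]
      have e2 : ∑ s'', δs s'' * W s'' = Q s (π s) := by
        rw [Finset.sum_eq_single s]
        · simp [hδs, hWdef]
        · intro b _ hb; simp [hδs, hb]
        · intro h; exact absurd (Finset.mem_univ s) h
      rw [e1] at h1
      rw [e2] at h3
      linarith
    constructor
    · intro s a
      rw [hQstar s a]
      congr 1
      congr 1
      refine Finset.sum_congr rfl fun s' _ => ?_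
      rw [le_antisymm (key s') (le_ciSup_fin (Q s') (π s'))]
    · intro s a
      exact le_trans (le_ciSup_fin (Q s) a) (key s)
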